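/- Let α ≠ 0, β, γ, λ be real numbers. The function A(z) = β·(1+z²) + γ·z·√(1+z²) − λ·α²·z·√(1+z²)·arcsinh(z) satisfies the ODE −(1+z²)²·A''(z) + z·(1+z²)·A'(z) + 2·A(z) = 2λ·α²·(1+z²)² for all real z. -/

import Mathlib

noncomputable def S (z : ℝ) : ℝ := Real.sqrt (1 + z ^ 2)

lemma hpos (z : ℝ) : (0:ℝ) < 1 + z ^ 2 := by positivity

lemma hS0 (z : ℝ) : S z ≠ 0 := by
  unfold S; positivity

lemma hS2 (z : ℝ) : S z ^ 2 = 1 + z ^ 2 := Real.sq_sqrt (hpos z).le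

lemma hasDerivAt_S (z : ℝ) : HasDerivAt S (z / S z) z := by
  have h : HasDerivAt (fun z : ℝ => 1 + z ^ 2) (2 * z) z := by
    simpa using ((hasDerivAt_pow 2 z).const_add 1)
  have := (Real.hasDerivAt_sqrt (hpos z).ne').comp z h
  refine this.congr_deriv ?_
  have := hS0 z
  unfold S at *
  field_simp

noncomputable def A1 (beta gam lam alpha : ℝ) (z : ℝ) : ℝ :=
  2 * beta * z + gam * ((1 + 2 * z ^ 2) / S z)
    - lam * alpha ^ 2 * ((1 + 2 * z ^ 2) / S z * Real.arsinh z + z)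

lemma hasDerivAt_A (beta gam lam alpha : ℝ) (z : ℝ) :
    HasDerivAt (fun z => beta * (1 + z ^ 2) + gam * z * Real.sqrt (1 + z ^ 2)
      - lam * alpha ^ 2 * z * Real.sqrt (1 + z ^ 2) * Real.arsinh z)
      (A1 beta gam lam alpha z) z := by
  have hpow : HasDerivAt (fun z : ℝ => 1 + z ^ 2) (2 * z) z := by
    simpa using ((hasDerivAt_pow 2 z).const_add 1)
  have hzs : HasDerivAt (fun z : ℝ => z * S z) (1 * S z + z * (z / S z)) z :=
    (hasDerivAt_id z).mul (hasDerivAt_S z)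
  have h1 : HasDerivAt (fun z : ℝ => beta * (1 + z ^ 2)) (beta * (2 * z)) z :=
    hpow.const_mul beta
  have h2 : HasDerivAt (fun z : ℝ => gam * z * S z)
      (gam * (1 * S z + z * (z / S z))) z := by
    have := hzs.const_mul gam
    simpa [mul_assoc] using this
  have h3 : HasDerivAt (fun z : ℝ => lam * alpha ^ 2 * z * S z * Real.arsinh z)
      (lam * alpha ^ 2 * (1 * S z + z * (z / S z)) * Real.arsinh z
        + lam * alpha ^ 2 * z * S z * (Real.sqrt (1 + z ^ 2))⁻¹) z := by
    have hm : HasDerivAt (fun z : ℝ => lam * alpha ^ 2 * (z * S z))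
        (lam * alpha ^ 2 * (1 * S z + z * (z / S z))) z := hzs.const_mul _
    have := hm.mul (Real.hasDerivAt_arsinh z)
    exact (this.congr_deriv (by ring)).congr_of_eventuallyEq (Filter.Eventually.of_forall fun x => by simp only [Pi.mul_apply]; ring)
  have := (h1.add h2).sub h3
  have hfin : HasDerivAt (fun z => beta * (1 + z ^ 2) + gam * z * Real.sqrt (1 + z ^ 2)
      - lam * alpha ^ 2 * z * Real.sqrt (1 + z ^ 2) * Real.arsinh z)
      (beta * (2 * z) + gam * (1 * S z + z * (z / S z))
        - (lam * alpha ^ 2 * (1 * S z + z * (z / S z)) * Real.arsinh z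
          + lam * alpha ^ 2 * z * S z * (Real.sqrt (1 + z ^ 2))⁻¹)) z := by
    exact this
  convert hfin using 1
  have h0 := hS0 z
  have h2' := hS2 z
  unfold A1 S at *
  field_simp
  linear_combination (-(gam - lam * alpha ^ 2 * Real.arsinh z)) * h2'

noncomputable def A2 (beta gam lam alpha : ℝ) (z : ℝ) : ℝ :=
  2 * beta + gam * (z * (3 + 2 * z ^ 2) / S z ^ 3)
    - lam * alpha ^ 2 * (z * (3 + 2 * z ^ 2) / S z ^ 3 * Real.arsinh z
      + (1 + 2 * z ^ 2) / S z ^ 2 + 1)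

lemma hasDerivAt_A1 (beta gam lam alpha : ℝ) (z : ℝ) :
    HasDerivAt (A1 beta gam lam alpha) (A2 beta gam lam alpha z) z := by
  have h0 := hS0 z
  have h2' := hS2 z
  have hq : HasDerivAt (fun z : ℝ => (1 + 2 * z ^ 2) / S z)
      ((4 * z * S z - (1 + 2 * z ^ 2) * (z / S z)) / S z ^ 2) z := by
    have hn : HasDerivAt (fun z : ℝ => 1 + 2 * z ^ 2) (4 * z) z := by
      have := ((hasDerivAt_pow 2 z).const_mul 2).const_add 1
      simpa using this.congr_deriv (by push_cast; ring)
    exact hn.div (hasDerivAt_S z) h0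
  have h1 : HasDerivAt (fun z : ℝ => 2 * beta * z) (2 * beta) z := by
    simpa using (hasDerivAt_id z).const_mul (2 * beta)
  have h2 := hq.const_mul gam
  have h3 : HasDerivAt
      (fun z : ℝ => lam * alpha ^ 2 * ((1 + 2 * z ^ 2) / S z * Real.arsinh z + z))
      (lam * alpha ^ 2 *
        (((4 * z * S z - (1 + 2 * z ^ 2) * (z / S z)) / S z ^ 2) * Real.arsinh z
          + (1 + 2 * z ^ 2) / S z * (Real.sqrt (1 + z ^ 2))⁻¹ + 1)) z := by
    have := ((hq.mul (Real.hasDerivAt_arsinh z)).add (hasDerivAt_id z)).const_mul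
      (lam * alpha ^ 2)
    simpa using this
  have hfin := (h1.add h2).sub h3
  have hA1eq : A1 beta gam lam alpha = fun z => 2 * beta * z
      + gam * ((1 + 2 * z ^ 2) / S z)
      - lam * alpha ^ 2 * ((1 + 2 * z ^ 2) / S z * Real.arsinh z + z) := rfl
  rw [hA1eq]
  refine hfin.congr_deriv ?_
  unfold A2 S at *
  set t := Real.sqrt (1 + z ^ 2) with ht
  field_simp
  linear_combination (4 * z * (gam - lam * alpha ^ 2 * Real.arsinh z)) * h2'

theorem stmt_8 (alpha beta gam lam : ℝ) (ha : alpha ≠ 0) :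
    ∀ z : ℝ,
      -(1 + z ^ 2) ^ 2 *
          deriv (deriv (fun z => beta * (1 + z ^ 2) + gam * z * Real.sqrt (1 + z ^ 2)
            - lam * alpha ^ 2 * z * Real.sqrt (1 + z ^ 2) * Real.arsinh z)) z
      + z * (1 + z ^ 2) *
          deriv (fun z => beta * (1 + z ^ 2) + gam * z * Real.sqrt (1 + z ^ 2)
            - lam * alpha ^ 2 * z * Real.sqrt (1 + z ^ 2) * Real.arsinh z) z
      + 2 * (beta * (1 + z ^ 2) + gam * z * Real.sqrt (1 + z ^ 2)
            - lam * alpha ^ 2 * z * Real.sqrt (1 + z ^ 2) * Real.arsinh z)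
      = 2 * lam * alpha ^ 2 * (1 + z ^ 2) ^ 2 := by
  intro z
  have hd1 : deriv (fun z => beta * (1 + z ^ 2) + gam * z * Real.sqrt (1 + z ^ 2)
      - lam * alpha ^ 2 * z * Real.sqrt (1 + z ^ 2) * Real.arsinh z)
      = A1 beta gam lam alpha := funext fun z => (hasDerivAt_A beta gam lam alpha z).deriv
  rw [hd1, (hasDerivAt_A1 beta gam lam alpha z).deriv]
  have h0 := hS0 z
  have h2' := hS2 z
  unfold A1 A2 S at *
  set t := Real.sqrt (1 + z ^ 2) with ht
  field_simp
  linear_combination ((-3) * z ^ 2 * t * lam * alpha ^ 2 + (2) * z ^ 5 * gam + (5) * z ^ 3 * gam + (-2) * z ^ 5 * lam * alpha ^ 2 * Real.arsinh z + (-5) * z ^ 3 * lam * alpha ^ 2 * Real.arsinh z + (-1) * t * lam * alpha ^ 2 + (3) * z * gam + (-3) * z * lam * alpha ^ 2 * Real.arsinh z + (2) * z * t ^ 2 * gam + (-2) * z * t ^ 2 * lam * alpha ^ 2 * Real.arsinh z + (-2) * z ^ 4 * t * lam * alpha ^ 2) * h2'
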